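/- Every cop-win finite simple graph has a contractible clique complex. -/

import Mathlib

def stdBasisVec {V : Type*} [DecidableEq V] (v : V) : V → ℝ := fun i => if i = v then 1 else 0

/-- The standard geometric realization of the clique complex of a finite simple graph `G`. -/
def cliqueRealization {V : Type*} [Fintype V] [DecidableEq V] (G : SimpleGraph V) :
    Set (V → ℝ) :=
  ⋃ s ∈ {s : Finset V | G.IsClique (s : Set V)}, convexHull ℝ (stdBasisVec '' (s : Set V))

/-- The closed neighbourhood `N[v] = {v} ∪ {u : uv ∈ E(G)}`. -/
def closedNbhd {V : Type*} (G : SimpleGraph V) (v : V) : Set V := insert v {u | G.Adj v u}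

/-- A finite graph is cop-win iff it is dismantlable: the vertices can be enumerated
`v_0, …, v_{n-1}` so that, for every `ℓ ≥ 1`, the closed neighbourhood of `v_ℓ` in the induced
subgraph on `{v_0, …, v_ℓ}` is contained in the closed neighbourhood (in that subgraph) of some
earlier vertex (the Aigner–Fromme / Quilliot characterization). -/
def CopWin {V : Type*} [Fintype V] (G : SimpleGraph V) : Prop :=
  ∃ (n : ℕ) (e : V ≃ Fin n), ∀ v : V, 0 < (e v).val → ∃ w : V, ∃ hw : e w < e v,
    closedNbhd (G.comap (Subtype.val : {u : V // e u ≤ e v} → V)) ⟨v, le_refl _⟩ ⊆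
    closedNbhd (G.comap (Subtype.val : {u : V // e u ≤ e v} → V)) ⟨w, le_of_lt hw⟩

lemma mem_conv_iff {V : Type*} [Fintype V] [DecidableEq V] (s : Finset V) (x : V → ℝ) :
    x ∈ convexHull ℝ (stdBasisVec '' (s : Set V)) ↔
      (∀ u, 0 ≤ x u) ∧ (∀ u, u ∉ s → x u = 0) ∧ ∑ u, x u = 1 := by
  constructor
  · intro hx
    have key : convexHull ℝ (stdBasisVec '' (s : Set V)) ⊆
        {x : V → ℝ | (∀ u, 0 ≤ x u) ∧ (∀ u, u ∉ s → x u = 0) ∧ ∑ u, x u = 1} := by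
      apply convexHull_min
      · rintro y ⟨u, hu, rfl⟩
        refine ⟨fun i => ?_, fun i hi => ?_, ?_⟩
        · unfold stdBasisVec; split <;> norm_num
        · unfold stdBasisVec
          rw [if_neg]; rintro rfl; exact hi hu
        · simp [stdBasisVec]
      · rintro a ⟨ha0, haz, ha1⟩ b ⟨hb0, hbz, hb1⟩ p q hp hq hpq
        refine ⟨fun u => ?_, fun u hu => ?_, ?_⟩
        · have := ha0 u; have := hb0 u
          simp only [Pi.add_apply, Pi.smul_apply, smul_eq_mul]
          nlinarith
        · simp [haz u hu, hbz u hu]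
        · simp only [Pi.add_apply, Pi.smul_apply, smul_eq_mul]
          rw [Finset.sum_add_distrib, ← Finset.mul_sum, ← Finset.mul_sum, ha1, hb1]
          linarith
    exact key hx
  · rintro ⟨h0, hz, h1⟩
    have hs1 : ∑ u ∈ s, x u = 1 := by
      rw [← h1]
      exact (Finset.sum_subset (Finset.subset_univ s) (fun u _ hu => hz u hu))
    have hxe : x = ∑ u ∈ s, x u • stdBasisVec u := by
      funext i
      rw [Finset.sum_apply]
      simp only [Pi.smul_apply, stdBasisVec, smul_eq_mul]
      by_cases hi : i ∈ s
      · rw [Finset.sum_eq_single i (fun b _ hb => by rw [if_neg (Ne.symm hb), mul_zero])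
          (fun habs => absurd hi habs)]
        simp
      · rw [Finset.sum_eq_zero, hz i hi]
        intro u hu
        rw [if_neg, mul_zero]
        rintro rfl; exact hi hu
    rw [hxe, ← Finset.centerMass_eq_of_sum_1 _ _ hs1]
    exact Finset.centerMass_mem_convexHull _ (fun u _ => h0 u) (by rw [hs1]; norm_num)
      (fun u hu => ⟨u, hu, rfl⟩)

def realUpto {V : Type*} [Fintype V] [DecidableEq V] (G : SimpleGraph V) {n : ℕ}
    (e : V ≃ Fin n) (k : ℕ) : Set (V → ℝ) :=
  ⋃ s ∈ {s : Finset V | G.IsClique (s : Set V) ∧ ∀ u ∈ s, (e u : ℕ) ≤ k},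
    convexHull ℝ (stdBasisVec '' (s : Set V))

lemma mem_realUpto {V : Type*} [Fintype V] [DecidableEq V] {G : SimpleGraph V} {n : ℕ}
    {e : V ≃ Fin n} {k : ℕ} {x : V → ℝ} :
    x ∈ realUpto G e k ↔ ∃ s : Finset V, G.IsClique (s : Set V) ∧ (∀ u ∈ s, (e u : ℕ) ≤ k) ∧
      x ∈ convexHull ℝ (stdBasisVec '' (s : Set V)) := by
  simp only [realUpto, Set.mem_iUnion, Set.mem_setOf_eq, exists_prop]
  tauto

lemma move_mem {V : Type*} [Fintype V] [DecidableEq V] (v w : V) (hvw : v ≠ w) (s : Finset V)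
    (x : V → ℝ) (a : ℝ) (ha : 0 ≤ a) (hax : a ≤ x v)
    (hx : x ∈ convexHull ℝ (stdBasisVec '' (s : Set V))) :
    (fun u => x u + a * ((if u = w then (1:ℝ) else 0) - (if u = v then 1 else 0))) ∈
      convexHull ℝ (stdBasisVec '' ((insert w s : Finset V) : Set V)) := by
  rw [mem_conv_iff] at hx ⊢
  obtain ⟨h0, hz, h1⟩ := hx
  refine ⟨fun u => ?_, fun u hu => ?_, ?_⟩
  · by_cases huv : u = v
    · subst huv
      rw [if_neg hvw, if_pos rfl]
      linarith
    · by_cases huw : u = w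
      · subst huw
        rw [if_pos rfl, if_neg (Ne.symm hvw)]
        have := h0 u
        nlinarith
      · rw [if_neg huw, if_neg huv]
        have := h0 u
        linarith
  · rw [Finset.mem_insert, not_or] at hu
    obtain ⟨huw, hus⟩ := hu
    by_cases huv : u = v
    · subst huv
      rw [if_neg huw, if_pos rfl]
      have := hz u hus
      linarith
    · rw [if_neg huw, if_neg huv]
      rw [hz u hus]
      ring
  · rw [Finset.sum_add_distrib, ← Finset.mul_sum, h1, Finset.sum_sub_distrib]
    simp [Finset.sum_ite_eq']

lemma move_mem_end {V : Type*} [Fintype V] [DecidableEq V] (v w : V) (hvw : v ≠ w) (s : Finset V)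
    (x : V → ℝ) (hx : x ∈ convexHull ℝ (stdBasisVec '' (s : Set V))) :
    (fun u => x u + x v * ((if u = w then (1:ℝ) else 0) - (if u = v then 1 else 0))) ∈
      convexHull ℝ (stdBasisVec '' ((insert w (s.erase v) : Finset V) : Set V)) := by
  rw [mem_conv_iff] at hx ⊢
  obtain ⟨h0, hz, h1⟩ := hx
  refine ⟨fun u => ?_, fun u hu => ?_, ?_⟩
  · by_cases huv : u = v
    · subst huv
      rw [if_neg hvw, if_pos rfl]
      linarith
    · by_cases huw : u = w
      · subst huw
        rw [if_pos rfl, if_neg (Ne.symm hvw)]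
        have := h0 u; have := h0 v
        nlinarith
      · rw [if_neg huw, if_neg huv]
        have := h0 u
        linarith
  · rw [Finset.mem_insert, not_or] at hu
    obtain ⟨huw, hue⟩ := hu
    by_cases huv : u = v
    · subst huv
      rw [if_neg huw, if_pos rfl]
      ring
    · rw [if_neg huw, if_neg huv]
      have hus : u ∉ s := fun hus => hue (Finset.mem_erase.mpr ⟨huv, hus⟩)
      rw [hz u hus]
      ring
  · rw [Finset.sum_add_distrib, ← Finset.mul_sum, h1, Finset.sum_sub_distrib]
    simp [Finset.sum_ite_eq']

lemma contractible_realUpto {V : Type*} [Fintype V] [DecidableEq V] (G : SimpleGraph V) {n : ℕ}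
    (e : V ≃ Fin n) (hn : 0 < n)
    (h : ∀ v : V, 0 < (e v).val → ∃ w : V, ∃ hw : e w < e v,
      closedNbhd (G.comap (Subtype.val : {u : V // e u ≤ e v} → V)) ⟨v, le_refl _⟩ ⊆
      closedNbhd (G.comap (Subtype.val : {u : V // e u ≤ e v} → V)) ⟨w, le_of_lt hw⟩) :
    ∀ k : ℕ, ContractibleSpace ↥(realUpto G e k) := by
  intro k
  induction k with
  | zero =>
    have hset : realUpto G e 0 = {stdBasisVec (e.symm ⟨0, hn⟩)} := by
      ext x
      rw [mem_realUpto, Set.mem_singleton_iff]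
      constructor
      · rintro ⟨s, _, hb, hx⟩
        rw [mem_conv_iff] at hx
        obtain ⟨h0, hzero, h1⟩ := hx
        have hsub : ∀ u ∈ s, u = e.symm ⟨0, hn⟩ := by
          intro u hu
          have h2 : e u = ⟨0, hn⟩ := Fin.ext (Nat.le_zero.mp (hb u hu))
          rw [← h2, Equiv.symm_apply_apply]
        have hx0 : ∀ u, u ≠ e.symm ⟨0, hn⟩ → x u = 0 :=
          fun u hu => hzero u (fun hus => hu (hsub u hus))
        have hx1 : x (e.symm ⟨0, hn⟩) = 1 := by
          rw [← h1, Finset.sum_eq_single (e.symm ⟨0, hn⟩) (fun b _ hb => hx0 b hb)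
            (fun habs => absurd (Finset.mem_univ _) habs)]
        funext i
        by_cases hi : i = e.symm ⟨0, hn⟩
        · subst hi; simp [stdBasisVec, hx1]
        · simp [stdBasisVec, hi, hx0 i hi]
      · rintro rfl
        refine ⟨{e.symm ⟨0, hn⟩}, by simp, ?_, ?_⟩
        · intro u hu
          rw [Finset.mem_singleton] at hu
          subst hu
          simp
        · rw [mem_conv_iff]
          refine ⟨fun u => ?_, fun u hu => ?_, ?_⟩
          · unfold stdBasisVec; split <;> norm_num
          · rw [Finset.mem_singleton] at hu
            unfold stdBasisVec
            rw [if_neg hu]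
          · simp [stdBasisVec, Finset.sum_ite_eq']
    rw [hset]
    exact (convex_singleton _).contractibleSpace ⟨_, rfl⟩
  | succ k IH =>
    by_cases hk : k + 1 < n
    · -- main case
      obtain ⟨w, hw, hsub⟩ := h (e.symm ⟨k + 1, hk⟩)
        (by rw [Equiv.apply_symm_apply]; exact Nat.succ_pos k)
      set v : V := e.symm ⟨k + 1, hk⟩ with hv
      have hev : e v = ⟨k + 1, hk⟩ := e.apply_symm_apply _
      have hvw : v ≠ w := fun hvweq => by rw [← hvweq] at hw; exact absurd hw (lt_irrefl _)
      have hwk : (e w : ℕ) ≤ k := by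
        have h3 := hw
        rw [hev] at h3
        exact Nat.lt_succ_iff.mp h3
      have hbk : ∀ u : V, u ≠ v → (e u : ℕ) ≤ k + 1 → (e u : ℕ) ≤ k := by
        intro u huv hle
        rcases Nat.lt_or_ge (e u : ℕ) (k + 1) with h2 | h2
        · omega
        · exfalso
          apply huv
          have h3 : e u = ⟨k + 1, hk⟩ := Fin.ext (le_antisymm hle h2)
          have h4 := congrArg e.symm h3
          rw [Equiv.symm_apply_apply] at h4
          exact h4
      -- the dominating vertex absorbs cliques
      have hclique : ∀ s : Finset V, G.IsClique (s : Set V) → (∀ u ∈ s, (e u : ℕ) ≤ k + 1) →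
          v ∈ s → G.IsClique ((insert w s : Finset V) : Set V) := by
        intro s hc hb hvs
        have hadj : ∀ u ∈ s, u ≠ w → G.Adj w u := by
          intro u hu hne
          have hle : e u ≤ e v := by rw [hev, Fin.le_def]; exact hb u hu
          have hmem : (⟨u, hle⟩ : {z : V // e z ≤ e v}) ∈
              closedNbhd (G.comap (Subtype.val : {z : V // e z ≤ e v} → V)) ⟨v, le_refl _⟩ := by
            by_cases huv : u = v
            · subst huv
              exact Set.mem_insert _ _
            · exact Set.mem_insert_of_mem _ (hc hvs hu (fun hh => huv hh.symm))
          rcases hsub hmem with h1 | h2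
          · exact absurd (congrArg Subtype.val h1) hne
          · exact h2
        intro a ha b hb' hab
        simp only [Finset.coe_insert, Set.mem_insert_iff, Finset.mem_coe] at ha hb'
        rcases ha with rfl | ha
        · rcases hb' with rfl | hb'
          · exact absurd rfl hab
          · exact hadj b hb' (fun hh => hab hh.symm)
        · rcases hb' with rfl | hb'
          · exact (hadj a ha hab).symm
          · exact hc ha hb' hab
      set X := realUpto G e (k + 1) with hX
      set A := realUpto G e k with hA
      have hAX : A ⊆ X := by
        intro x hx
        rw [hA, mem_realUpto] at hx
        obtain ⟨s, hc, hb, hxs⟩ := hx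
        rw [hX, mem_realUpto]
        exact ⟨s, hc, fun u hu => (hb u hu).trans (Nat.le_succ k), hxs⟩
      have claimA : ∀ (t : ℝ), 0 ≤ t → t ≤ 1 → ∀ x : V → ℝ, x ∈ X →
          (fun u => x u + (t * x v) * ((if u = w then (1:ℝ) else 0) - (if u = v then 1 else 0)))
            ∈ X := by
        intro t ht0 ht1 x hx
        rw [hX, mem_realUpto] at hx ⊢
        obtain ⟨s, hc, hb, hxs⟩ := hx
        have hx0 : ∀ u, 0 ≤ x u := ((mem_conv_iff s x).mp hxs).1
        by_cases hvs : v ∈ s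
        · refine ⟨insert w s, hclique s hc hb hvs, ?_, ?_⟩
          · intro u hu
            rw [Finset.mem_insert] at hu
            rcases hu with rfl | hu
            · omega
            · exact hb u hu
          · exact move_mem v w hvw s x (t * x v) (mul_nonneg ht0 (hx0 v))
              (by nlinarith [hx0 v]) hxs
        · have hxv : x v = 0 := ((mem_conv_iff s x).mp hxs).2.1 v hvs
          have : (fun u => x u + (t * x v) *
              ((if u = w then (1:ℝ) else 0) - (if u = v then 1 else 0))) = x := by
            funext u
            rw [hxv]
            ring
          rw [this]
          exact ⟨s, hc, hb, hxs⟩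
      have claimB : ∀ x : V → ℝ, x ∈ X →
          (fun u => x u + x v * ((if u = w then (1:ℝ) else 0) - (if u = v then 1 else 0)))
            ∈ A := by
        intro x hx
        rw [hX, mem_realUpto] at hx
        obtain ⟨s, hc, hb, hxs⟩ := hx
        rw [hA, mem_realUpto]
        by_cases hvs : v ∈ s
        · refine ⟨insert w (s.erase v), ?_, ?_, move_mem_end v w hvw s x hxs⟩
          · refine (hclique s hc hb hvs).subset ?_
            intro u hu
            simp only [Finset.coe_insert, Set.mem_insert_iff, Finset.mem_coe,
              Finset.mem_erase] at hu ⊢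
            tauto
          · intro u hu
            rw [Finset.mem_insert] at hu
            rcases hu with rfl | hu
            · exact hwk
            · rw [Finset.mem_erase] at hu
              exact hbk u hu.1 (hb u hu.2)
        · have hxv : x v = 0 := ((mem_conv_iff s x).mp hxs).2.1 v hvs
          have heq : (fun u => x u + x v *
              ((if u = w then (1:ℝ) else 0) - (if u = v then 1 else 0))) = x := by
            funext u
            rw [hxv]
            ring
          rw [heq]
          refine ⟨s, hc, fun u hu => hbk u ?_ (hb u hu), hxs⟩
          rintro rfl
          exact hvs hu
      -- topology
      have hcont : Continuous (fun x : V → ℝ => (fun u => x u + x v *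
          ((if u = w then (1:ℝ) else 0) - (if u = v then 1 else 0)))) := by
        apply continuous_pi
        intro u
        exact (continuous_apply u).add ((continuous_apply v).mul continuous_const)
      let F : C(↥X, ↥A) := ⟨fun x => ⟨_, claimB x.1 x.2⟩,
        (hcont.comp continuous_subtype_val).subtype_mk _⟩
      let i : C(↥A, ↥X) := ⟨fun a => ⟨a.1, hAX a.2⟩, continuous_subtype_val.subtype_mk _⟩
      have hcont2 : Continuous (fun p : ↥unitInterval × ↥X => (fun u => p.2.1 u +
          ((p.1 : ℝ) * p.2.1 v) *
          ((if u = w then (1:ℝ) else 0) - (if u = v then 1 else 0)))) := by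
        apply continuous_pi
        intro u
        have h2 : Continuous fun p : ↥unitInterval × ↥X => (p.2 : V → ℝ) u :=
          (continuous_apply u).comp (continuous_subtype_val.comp continuous_snd)
        have h3 : Continuous fun p : ↥unitInterval × ↥X => (p.2 : V → ℝ) v :=
          (continuous_apply v).comp (continuous_subtype_val.comp continuous_snd)
        have h4 : Continuous fun p : ↥unitInterval × ↥X => (p.1 : ℝ) :=
          continuous_subtype_val.comp continuous_fst
        exact h2.add ((h4.mul h3).mul continuous_const)
      let H0 : C(↥unitInterval × ↥X, ↥X) :=
        ⟨fun p => ⟨_, claimA p.1.1 p.1.2.1 p.1.2.2 p.2.1 p.2.2⟩, hcont2.subtype_mk _⟩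
      have hH : (ContinuousMap.id ↥X).Homotopic (i.comp F) := by
        refine ⟨⟨H0, ?_, ?_⟩⟩
        · intro x
          apply Subtype.ext
          funext u
          show (x : V → ℝ) u + (((0 : ↥unitInterval) : ℝ) * (x : V → ℝ) v) *
            ((if u = w then (1:ℝ) else 0) - (if u = v then 1 else 0)) = (x : V → ℝ) u
          norm_num
        · intro x
          apply Subtype.ext
          funext u
          show (x : V → ℝ) u + (((1 : ↥unitInterval) : ℝ) * (x : V → ℝ) v) *
            ((if u = w then (1:ℝ) else 0) - (if u = v then 1 else 0)) =
            (x : V → ℝ) u + (x : V → ℝ) v *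
            ((if u = w then (1:ℝ) else 0) - (if u = v then 1 else 0))
          norm_num
      obtain ⟨a0, ha0⟩ := (contractible_iff_id_nullhomotopic ↥A).mp IH
      have h2 : (i.comp F).Homotopic (ContinuousMap.const ↥X (i a0)) := by
        have step1 : ((ContinuousMap.id ↥A).comp F).Homotopic
            ((ContinuousMap.const ↥A a0).comp F) :=
          ContinuousMap.Homotopic.comp ha0 (ContinuousMap.Homotopic.refl F)
        have step2 : (i.comp ((ContinuousMap.id ↥A).comp F)).Homotopic
            (i.comp ((ContinuousMap.const ↥A a0).comp F)) :=
          ContinuousMap.Homotopic.comp (ContinuousMap.Homotopic.refl i) step1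
        simpa using step2
      exact (contractible_iff_id_nullhomotopic ↥X).mpr ⟨i a0, hH.trans h2⟩
    · have heq : realUpto G e (k + 1) = realUpto G e k := by
        ext x
        rw [mem_realUpto, mem_realUpto]
        constructor
        · rintro ⟨s, hc, hb, hx⟩
          refine ⟨s, hc, fun u hu => ?_, hx⟩
          have := (e u).isLt
          omega
        · rintro ⟨s, hc, hb, hx⟩
          exact ⟨s, hc, fun u hu => (hb u hu).trans (Nat.le_succ k), hx⟩
      rw [heq]
      exact IH

/-- Every cop-win finite simple graph has a contractible clique complex. -/
theorem stmt_2 {V : Type*} [Fintype V] [DecidableEq V] [Nonempty V] (G : SimpleGraph V)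
    (h : CopWin G) : ContractibleSpace ↥(cliqueRealization G) := by
  obtain ⟨n, e, hd⟩ := h
  have hn : 0 < n := (e (Classical.arbitrary V)).pos
  have heq : cliqueRealization G = realUpto G e (n - 1) := by
    unfold cliqueRealization realUpto
    ext x
    simp only [Set.mem_iUnion, Set.mem_setOf_eq, exists_prop]
    constructor
    · rintro ⟨s, hs, hx⟩
      refine ⟨s, ⟨hs, fun u _ => ?_⟩, hx⟩
      have := (e u).isLt
      omega
    · rintro ⟨s, ⟨hs, _⟩, hx⟩
      exact ⟨s, hs, hx⟩
  rw [heq]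
  exact contractible_realUpto G e hn hd (n - 1)
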